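/- Let λ_1, λ_2 ∈ ℂ with λ_1 ≠ λ_2 and |λ_1| = |λ_2| = 1. Then the complex number μ := (λ_1² − λ_1·λ_2 + λ_2²)/(λ_1 − λ_2)² is real and equals 1 − |λ_1/λ_2 − 1|^{-2}; consequently μ > 0 if and only if |λ_1/λ_2 − 1| > 1. -/

import Mathlib

/-- for distinct modulus-1 complex numbers `λ₁, λ₂`, the quantity
`μ = (λ₁² − λ₁λ₂ + λ₂²)/(λ₁ − λ₂)²` is real, equals `1 − |λ₁/λ₂ − 1|⁻²`, and is positive
iff `|λ₁/λ₂ − 1| > 1`. -/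
theorem mu2_real_formula (l1 l2 : ℂ) (hne : l1 ≠ l2)
    (h1 : ‖l1‖ = 1) (h2 : ‖l2‖ = 1) :
    ∃ r : ℝ, (l1 ^ 2 - l1 * l2 + l2 ^ 2) / (l1 - l2) ^ 2 = (r : ℂ) ∧
      r = 1 - ((‖l1 / l2 - 1‖) ^ 2)⁻¹ ∧
      (0 < r ↔ 1 < ‖l1 / l2 - 1‖) := by
  have hl1 : l1 ≠ 0 := by intro h; simp [h] at h1
  have hl2 : l2 ≠ 0 := by intro h; simp [h] at h2
  have hd : l1 - l2 ≠ 0 := sub_ne_zero.mpr hne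
  have habs : ‖l1 / l2 - 1‖ = ‖l1 - l2‖ := by
    have : l1 / l2 - 1 = (l1 - l2) / l2 := by field_simp
    rw [this, norm_div, h2, div_one]
  have hc1 : (starRingEnd ℂ) l1 = l1⁻¹ := (Complex.inv_eq_conj h1).symm
  have hc2 : (starRingEnd ℂ) l2 = l2⁻¹ := (Complex.inv_eq_conj h2).symm
  have hns : ((Complex.normSq (l1 - l2) : ℝ) : ℂ) = -(l1 - l2) ^ 2 / (l1 * l2) := by
    rw [← Complex.mul_conj, map_sub, hc1, hc2]
    field_simp
    ring
  have ha : (0 : ℝ) < ‖l1 - l2‖ := by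
    exact norm_pos_iff.mpr hd
  refine ⟨1 - ((‖l1 - l2‖) ^ 2)⁻¹, ?_, by rw [habs], ?_⟩
  · have hsq : ((‖l1 - l2‖ ^ 2 : ℝ) : ℂ) = -(l1 - l2) ^ 2 / (l1 * l2) := by
      rw [← Complex.sq_norm] at hns
      exact_mod_cast hns
    push_cast at hsq ⊢
    rw [hsq]
    field_simp
    ring
  · constructor
    · intro hr
      by_contra hle
      push_neg at hle
      rw [habs] at hle
      have : (‖l1 - l2‖) ^ 2 ≤ 1 := by nlinarith
      have hpos2 : (0:ℝ) < (‖l1 - l2‖) ^ 2 := by positivity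
      have h2' : (1:ℝ) ≤ ((‖l1 - l2‖) ^ 2)⁻¹ := by
        nlinarith [inv_pos.mpr hpos2, mul_inv_cancel₀ (ne_of_gt hpos2)]
      linarith
    · intro hgt
      rw [habs] at hgt
      have h1' : (1:ℝ) < (‖l1 - l2‖) ^ 2 := by nlinarith
      have : ((‖l1 - l2‖) ^ 2)⁻¹ < 1 := by
        rw [inv_lt_one_iff₀]; right; exact h1'
      linarith
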